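/- Let [a_1,…,a_r] and [b_1,…,b_s] be conjugate strings. Let M be the symmetric tridiagonal (r+s+1) × (r+s+1) integer matrix whose diagonal entries are, in order, −a_r, −a_{r−1}, …, −a_1, −1, −b_1, b_2, …, −b_s (i.e. the negatives of the entries of the string [a_r,…,a_1,1,b_1,…,b_s]), whose entries immediately above and below the diagonal are all 1, and whose remaining entries are 0. Then M is negative semidefinite and has a nontrivial kernel (in particular M is not negative definite). -/

import Mathlib

def hjValue : List ℤ → ℚ
  | [] => 0
  | a :: l => (a : ℚ) - 1 / hjValue l

def IsString (l : List ℤ) : Prop := l ≠ [] ∧ ∀ x ∈ l, 2 ≤ x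

def IsConjugate (a b : List ℤ) : Prop :=
  ∃ m q : ℕ, 1 ≤ q ∧ q < m ∧ Nat.Coprime m q ∧
    hjValue a = (m : ℚ) / q ∧ hjValue b = (m : ℚ) / ((m : ℚ) - q)

namespace HJaux
open Matrix

noncomputable def g (c : ℤ) : Matrix (Fin 2) (Fin 2) ℤ := !![c, -1; 1, 0]
noncomputable def G (L : List ℤ) : Matrix (Fin 2) (Fin 2) ℤ := (L.map g).prod
noncomputable def J : Matrix (Fin 2) (Fin 2) ℤ := !![1, 0; 0, -1]
noncomputable def hn (L : List ℤ) : ℤ := G L 0 0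
noncomputable def hd (L : List ℤ) : ℤ := G L 1 0

lemma G_cons (c : ℤ) (L : List ℤ) : G (c :: L) = g c * G L := by simp [G]
lemma G_append (L1 L2 : List ℤ) : G (L1 ++ L2) = G L1 * G L2 := by simp [G]
@[simp] lemma hn_nil : hn [] = 1 := rfl
@[simp] lemma hd_nil : hd [] = 0 := rfl
lemma hn_cons (c : ℤ) (L : List ℤ) : hn (c :: L) = c * hn L - hd L := by
  simp [hn, hd, G_cons, g, Matrix.mul_apply, Fin.sum_univ_two]; ring
lemma hd_cons (c : ℤ) (L : List ℤ) : hd (c :: L) = hn L := by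
  simp [hn, hd, G_cons, g, Matrix.mul_apply, Fin.sum_univ_two]
lemma det_G (L : List ℤ) : (G L).det = 1 := by
  induction L with
  | nil => simp [G]
  | cons c L ih => rw [G_cons, Matrix.det_mul, ih]; simp [g, Matrix.det_fin_two]

lemma JJ : J * J = 1 := by
  ext i j
  fin_cases i <;> fin_cases j <;>
    simp [J, Matrix.mul_apply, Fin.sum_univ_two, Matrix.one_apply]
lemma gJ (c : ℤ) : (g c)ᵀ * J = J * g c := by
  ext i j
  fin_cases i <;> fin_cases j <;>
    simp [J, g, Matrix.mul_apply, Fin.sum_univ_two, Matrix.transpose_apply,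
      Matrix.vecHead, Matrix.vecTail]
lemma G_reverse (L : List ℤ) : G L.reverse = J * (G L)ᵀ * J := by
  induction L with
  | nil => simp [G]; exact JJ.symm
  | cons c L ih =>
    have hc : G [c] = g c := by simp [G]
    calc G (c :: L).reverse = G L.reverse * G [c] := by
          rw [List.reverse_cons, G_append]
      _ = J * (G L)ᵀ * (J * g c) := by rw [ih, hc, mul_assoc]
      _ = J * (G L)ᵀ * ((g c)ᵀ * J) := by rw [gJ]
      _ = J * (g c * G L)ᵀ * J := by
          rw [Matrix.transpose_mul, ← mul_assoc, ← mul_assoc, mul_assoc J]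
      _ = J * (G (c :: L))ᵀ * J := by rw [← G_cons]

lemma G_reverse_00 (L : List ℤ) : G L.reverse 0 0 = G L 0 0 := by
  rw [G_reverse]
  simp [J, Matrix.mul_apply, Fin.sum_univ_two, Matrix.vecMul, dotProduct,
    Matrix.transpose_apply, Matrix.vecHead]
lemma G_reverse_01 (L : List ℤ) : G L.reverse 0 1 = -G L 1 0 := by
  rw [G_reverse]
  simp [J, Matrix.mul_apply, Fin.sum_univ_two, Matrix.vecMul, dotProduct,
    Matrix.transpose_apply, Matrix.vecHead]

lemma string_bounds (L : List ℤ) (h2 : ∀ x ∈ L, 2 ≤ x) :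
    hd L < hn L ∧ 0 ≤ hd L := by
  induction L with
  | nil => simp
  | cons c L ih =>
    have hc : 2 ≤ c := h2 c (by simp)
    have ih' := ih (fun x hx => h2 x (by simp [hx]))
    rw [hn_cons, hd_cons]
    constructor
    · nlinarith [ih'.1, ih'.2]
    · linarith [ih'.1, ih'.2]

lemma hn_pos (L : List ℤ) (h2 : ∀ x ∈ L, 2 ≤ x) : 0 < hn L :=
  lt_of_le_of_lt (string_bounds L h2).2 (string_bounds L h2).1

lemma hd_pos (L : List ℤ) (h2 : ∀ x ∈ L, 2 ≤ x) (hne : L ≠ []) : 0 < hd L := by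
  match L with
  | c :: T => rw [hd_cons]; exact hn_pos T (fun x hx => h2 x (by simp [hx]))

lemma value_eq (L : List ℤ) (h2 : ∀ x ∈ L, 2 ≤ x) :
    hjValue L = (hn L : ℚ) / (hd L : ℚ) := by
  induction L with
  | nil => simp [hjValue]
  | cons c L ih =>
    have ih' := ih (fun x hx => h2 x (by simp [hx]))
    have hpos : 0 < hn L := hn_pos L (fun x hx => h2 x (by simp [hx]))
    have hne : (hn L : ℚ) ≠ 0 := by exact_mod_cast hpos.ne'
    rw [hjValue, ih', hn_cons, hd_cons]
    rw [one_div, inv_div]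
    push_cast
    field_simp

lemma hn_coprime (L : List ℤ) : IsCoprime (hn L) (hd L) := by
  induction L with
  | nil => simp [isCoprime_one_left]
  | cons c L ih =>
    rw [hn_cons, hd_cons]
    have h : IsCoprime (-hd L + hn L * c) (hn L) := (ih.symm.neg_left).add_mul_left_left c
    have he : c * hn L - hd L = -hd L + hn L * c := by ring
    rwa [he]

lemma extract (L : List ℤ) (h2 : ∀ x ∈ L, 2 ≤ x) (hne : L ≠ [])
    (M' Q : ℤ) (hQ : 0 < Q) (hQM : Q < M') (hcop : IsCoprime M' Q)
    (hval : hjValue L = (M' : ℚ) / (Q : ℚ)) : hn L = M' ∧ hd L = Q := by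
  have hv := value_eq L h2
  rw [hval] at hv
  have hdpos := hd_pos L h2 hne
  have hnpos := hn_pos L h2
  have hQQ : (Q : ℚ) ≠ 0 := by exact_mod_cast hQ.ne'
  have hdd : ((hd L : ℚ)) ≠ 0 := by exact_mod_cast hdpos.ne'
  have hcross : M' * hd L = hn L * Q := by
    have := (div_eq_div_iff hQQ hdd).mp hv
    exact_mod_cast this
  have h1 : hn L ∣ M' := by
    refine (hn_coprime L).dvd_of_dvd_mul_right ?_
    exact ⟨Q, by linarith [hcross]⟩
  have h2' : M' ∣ hn L := by
    refine hcop.dvd_of_dvd_mul_right ?_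
    exact ⟨hd L, by linarith [hcross]⟩
  have hM : hn L = M' :=
    le_antisymm (Int.le_of_dvd (by linarith) h1) (Int.le_of_dvd hnpos h2')
  refine ⟨hM, ?_⟩
  have hM0 : M' ≠ 0 := by linarith
  have heq : M' * hd L = M' * Q := by rw [hcross, hM]
  exact mul_left_cancel₀ hM0 heq

lemma key (a b : List ℤ) (m q : ℤ)
    (hna : hn a = m) (hda : hd a = q) (hnb : hn b = m) (hdb : hd b = m - q)
    (j : ℕ) :
    hn ((a.take j).reverse ++ 1 :: b) = hd (a.drop j) := by
  have hsplit : G a = G (a.take j) * G (a.drop j) := by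
    rw [← G_append, List.take_append_drop]
  set A := G (a.take j) with hA
  set B := G (a.drop j) with hB
  have hdet : A 0 0 * A 1 1 - A 0 1 * A 1 0 = 1 := by
    have := det_G (a.take j); rwa [Matrix.det_fin_two] at this
  have hmm : m = A 0 0 * B 0 0 + A 0 1 * B 1 0 := by
    rw [← hna]; show G a 0 0 = _
    rw [hsplit, Matrix.mul_apply, Fin.sum_univ_two]
  have hqq : q = A 1 0 * B 0 0 + A 1 1 * B 1 0 := by
    rw [← hda]; show G a 1 0 = _
    rw [hsplit, Matrix.mul_apply, Fin.sum_univ_two]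
  have h1b : hn (1 :: b) = q := by rw [hn_cons, hnb, hdb]; ring
  have h2b : hd (1 :: b) = m := by rw [hd_cons, hnb]
  have hexp : hn ((a.take j).reverse ++ 1 :: b)
      = A 0 0 * q + (- A 1 0) * m := by
    show G _ 0 0 = _
    rw [G_append, Matrix.mul_apply, Fin.sum_univ_two]
    rw [show G (a.take j).reverse 0 0 = A 0 0 from G_reverse_00 _,
        show G (a.take j).reverse 0 1 = -A 1 0 from G_reverse_01 _]
    rw [show G (1 :: b) 0 0 = q from h1b, show G (1 :: b) 1 0 = m from h2b]
  rw [hexp]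
  show _ = B 1 0
  linear_combination A 0 0 * hqq - A 1 0 * hmm + B 1 0 * hdet

end HJaux

theorem conjugate_glue_matrix_negSemidef_kernel (a b : List ℤ)
    (ha : IsString a) (hb : IsString b) (hconj : IsConjugate a b) :
    let l : List ℤ := a.reverse ++ 1 :: b
    let M : Matrix (Fin l.length) (Fin l.length) ℝ := fun i j =>
      if i = j then -(l.get i : ℝ)
      else if (i : ℕ) + 1 = (j : ℕ) ∨ (j : ℕ) + 1 = (i : ℕ) then 1 else 0
    (-M).PosSemidef ∧ ∃ x : Fin l.length → ℝ, x ≠ 0 ∧ M.mulVec x = 0 := by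
  obtain ⟨hane, ha2⟩ := ha
  obtain ⟨hbne, hb2⟩ := hb
  obtain ⟨m, q, hq1, hqm, hcop, hva, hvb⟩ := hconj
  intro l M
  have hM : ∀ i j : Fin l.length, M i j =
      (if i = j then -(l.get i : ℝ)
       else if (i : ℕ) + 1 = (j : ℕ) ∨ (j : ℕ) + 1 = (i : ℕ) then 1 else 0) :=
    fun i j => rfl
  have hl : l = a.reverse ++ 1 :: b := rfl
  have hlen : l.length = a.length + (b.length + 1) := by
    rw [hl]; simp
  have har : 1 ≤ a.length := List.length_pos_iff.mpr hane
  -- integer data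
  have hcopz : IsCoprime (m : ℤ) (q : ℤ) := by
    rw [Int.isCoprime_iff_gcd_eq_one]
    exact_mod_cast hcop
  have hq1' : (0 : ℤ) < q := by exact_mod_cast hq1
  have hqm' : (q : ℤ) < m := by exact_mod_cast hqm
  have hA := HJaux.extract a ha2 hane m q hq1' hqm' hcopz
    (by rw [hva]; push_cast; ring_nf)
  have hcopz2 : IsCoprime (m : ℤ) ((m : ℤ) - q) := by
    have h := (hcopz.neg_right).add_mul_left_right 1
    have he : -(q:ℤ) + m * 1 = (m:ℤ) - q := by ring
    rwa [he] at h
  have hB := HJaux.extract b hb2 hbne m ((m : ℤ) - q) (by linarith) (by linarith) hcopz2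
    (by rw [hvb]; push_cast; ring_nf)
  -- the kernel sequence
  set z : ℕ → ℤ := fun k => HJaux.hn (l.drop k) with hz_def
  have hkey : ∀ j : ℕ, HJaux.hn ((a.take j).reverse ++ 1 :: b) = HJaux.hd (a.drop j) :=
    HJaux.key a b m q hA.1 hA.2 hB.1 hB.2
  have hz0 : z 0 = 0 := by
    show HJaux.hn (l.drop 0) = 0
    rw [List.drop_zero, hl]
    have h := hkey a.length
    rw [List.take_length] at h
    rw [h, List.drop_length, HJaux.hd_nil]
  have hzpos : ∀ k, 1 ≤ k → k ≤ l.length → 0 < z k := by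
    intro k hk1 hkn
    by_cases hkr : k ≤ a.length
    · have hdrop : l.drop k = (a.take (a.length - k)).reverse ++ 1 :: b := by
        rw [hl, List.drop_append_of_le_length (by simpa using hkr)]
        congr 1
        rw [List.reverse_take]
        congr 1
        omega
      show 0 < HJaux.hn (l.drop k)
      rw [hdrop, hkey (a.length - k)]
      have hne : a.drop (a.length - k) ≠ [] := by
        intro h
        have := congrArg List.length h
        simp at this
        omega
      exact HJaux.hd_pos _ (fun x hx => ha2 x (List.mem_of_mem_drop hx)) hne
    · have hl' : l = (a.reverse ++ [1]) ++ b := by rw [hl]; simp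
      have hlen1 : (a.reverse ++ [1]).length = a.length + 1 := by simp
      have hdrop : l.drop k = b.drop (k - (a.length + 1)) := by
        rw [hl', List.drop_append,
          List.drop_eq_nil_of_le (by omega), List.nil_append, hlen1]
      show 0 < HJaux.hn (l.drop k)
      rw [hdrop]
      exact HJaux.hn_pos _ (fun x hx => hb2 x (List.mem_of_mem_drop hx))
  have hzrec : ∀ k (hk : k < l.length), z k =
      (l.get ⟨k, hk⟩) * z (k + 1) - (if k + 1 < l.length then z (k + 2) else 0) := by
    intro k hk
    have h1 : l.drop k = l.get ⟨k, hk⟩ :: l.drop (k + 1) := by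
      rw [List.drop_eq_getElem_cons hk]
      rfl
    have h2 : HJaux.hd (l.drop (k + 1)) = (if k + 1 < l.length then z (k + 2) else 0) := by
      by_cases h : k + 1 < l.length
      · rw [if_pos h, List.drop_eq_getElem_cons h, HJaux.hd_cons]
      · rw [if_neg h, List.drop_eq_nil_of_le (by omega), HJaux.hd_nil]
    show HJaux.hn (l.drop k) = _
    rw [h1, HJaux.hn_cons, h2]
  -- the kernel vector
  set X : Fin l.length → ℝ := fun k => ((z ((k : ℕ) + 1) : ℤ) : ℝ) with hX_def
  have hXpos : ∀ k : Fin l.length, 0 < X k := by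
    intro k
    have hk := k.isLt
    have h := hzpos ((k : ℕ) + 1) (by omega) (by omega)
    show (0 : ℝ) < ((z ((k : ℕ) + 1) : ℤ) : ℝ)
    exact_mod_cast h
  have hnpos : 0 < l.length := by omega
  -- casting the recursion to ℝ
  have hzrecR : ∀ k (hk : k < l.length), ((z k : ℤ) : ℝ) =
      (l.get ⟨k, hk⟩ : ℝ) * ((z (k + 1) : ℤ) : ℝ)
        - (if k + 1 < l.length then ((z (k + 2) : ℤ) : ℝ) else 0) := by
    intro k hk
    have h := hzrec k hk
    by_cases hc : k + 1 < l.length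
    · rw [if_pos hc] at h ⊢
      exact_mod_cast congrArg (Int.cast : ℤ → ℝ) h
    · rw [if_neg hc] at h ⊢
      rw [sub_zero] at h ⊢
      exact_mod_cast congrArg (Int.cast : ℤ → ℝ) h
  -- M X = 0
  have hMX : M.mulVec X = 0 := by
    funext k
    show ∑ j, M k j * X j = 0
    have hkv := k.isLt
    have hXval : ∀ (i : ℕ) (hi : i < l.length), X ⟨i, hi⟩ = ((z (i + 1) : ℤ) : ℝ) :=
      fun i hi => rfl
    have hgetk : l.get k = l.get ⟨(k : ℕ), hkv⟩ := by congr
    by_cases hk1 : (k : ℕ) + 1 < l.length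
    · by_cases hk0 : 0 < (k : ℕ)
      · -- interior row
        have hkm : (k : ℕ) - 1 < l.length := by omega
        obtain ⟨km, hkmv⟩ : ∃ km : Fin l.length, (km : ℕ) = (k : ℕ) - 1 := ⟨⟨_, hkm⟩, rfl⟩
        obtain ⟨kp, hkpv⟩ : ∃ kp : Fin l.length, (kp : ℕ) = (k : ℕ) + 1 := ⟨⟨_, hk1⟩, rfl⟩
        have hterm : ∀ j : Fin l.length, M k j * X j =
            (if j = km then X km else 0)
              + (if j = k then (-(l.get k : ℝ)) * X k else 0)
              + (if j = kp then X kp else 0) := by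
          intro j
          have hjv := j.isLt
          rw [hM]
          by_cases h2 : j = k
          · subst h2
            rw [if_pos rfl, if_pos rfl,
              if_neg (by simp only [Fin.ext_iff, Fin.val_mk, hkmv]; omega),
              if_neg (by simp only [Fin.ext_iff, Fin.val_mk, hkpv]; omega)]
            ring
          · rw [if_neg (fun h => h2 h.symm)]
            by_cases h1 : j = km
            · subst h1
              rw [if_pos (by simp only [Fin.ext_iff, Fin.val_mk, hkmv] at h2 ⊢; omega),
                if_pos rfl, if_neg h2,
                if_neg (by simp only [Fin.ext_iff, Fin.val_mk, hkmv, hkpv]; omega)]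
              ring
            · by_cases h3 : j = kp
              · subst h3
                rw [if_pos (Or.inl hkpv.symm), if_neg h1, if_neg h2, if_pos rfl]
                ring
              · rw [if_neg ?hc, if_neg h1, if_neg h2, if_neg h3]
                · ring
                case hc =>
                  simp only [Fin.ext_iff, Fin.val_mk, hkmv, hkpv] at h1 h2 h3 ⊢
                  omega
        rw [Finset.sum_congr rfl (fun j _ => hterm j), Finset.sum_add_distrib,
          Finset.sum_add_distrib, Finset.sum_ite_eq', Finset.sum_ite_eq',
          Finset.sum_ite_eq']
        simp only [Finset.mem_univ, if_true]
        have hrec := hzrecR (k : ℕ) hkv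
        rw [if_pos hk1] at hrec
        have hkmX : X km = ((z (k : ℕ) : ℤ) : ℝ) := by
          show ((z ((km : ℕ) + 1) : ℤ) : ℝ) = _
          rw [hkmv]
          congr 2
          omega
        have hkX : X k = ((z ((k : ℕ) + 1) : ℤ) : ℝ) := rfl
        have hkpX : X kp = ((z ((k : ℕ) + 2) : ℤ) : ℝ) := by
          show ((z ((kp : ℕ) + 1) : ℤ) : ℝ) = _
          rw [hkpv]
        rw [hkmX, hkX, hkpX, hgetk]
        linarith [hrec]
      · -- leftmost row
        obtain ⟨kp, hkpv⟩ : ∃ kp : Fin l.length, (kp : ℕ) = (k : ℕ) + 1 := ⟨⟨_, hk1⟩, rfl⟩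
        have hterm : ∀ j : Fin l.length, M k j * X j =
            (if j = k then (-(l.get k : ℝ)) * X k else 0)
              + (if j = kp then X kp else 0) := by
          intro j
          have hjv := j.isLt
          rw [hM]
          by_cases h2 : j = k
          · subst h2
            rw [if_pos rfl, if_pos rfl,
              if_neg (by simp only [Fin.ext_iff, Fin.val_mk, hkpv]; omega)]
            ring
          · rw [if_neg (fun h => h2 h.symm)]
            by_cases h3 : j = kp
            · subst h3
              rw [if_pos (Or.inl hkpv.symm), if_neg h2, if_pos rfl]
              ring
            · rw [if_neg ?hc, if_neg h2, if_neg h3]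
              · ring
              case hc =>
                simp only [Fin.ext_iff, Fin.val_mk, hkpv] at h2 h3 ⊢
                omega
        rw [Finset.sum_congr rfl (fun j _ => hterm j), Finset.sum_add_distrib,
          Finset.sum_ite_eq', Finset.sum_ite_eq']
        simp only [Finset.mem_univ, if_true]
        have hrec := hzrecR (k : ℕ) hkv
        rw [if_pos hk1] at hrec
        have hzk : ((z (k : ℕ) : ℤ) : ℝ) = 0 := by
          have h0 : (k : ℕ) = 0 := by omega
          rw [h0, hz0]
          norm_num
        rw [hzk] at hrec
        have hkX : X k = ((z ((k : ℕ) + 1) : ℤ) : ℝ) := rfl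
        have hkpX : X kp = ((z ((k : ℕ) + 2) : ℤ) : ℝ) := by
          show ((z ((kp : ℕ) + 1) : ℤ) : ℝ) = _
          rw [hkpv]
        rw [hkX, hkpX, hgetk]
        linarith [hrec]
    · by_cases hk0 : 0 < (k : ℕ)
      · -- rightmost row
        have hkm : (k : ℕ) - 1 < l.length := by omega
        obtain ⟨km, hkmv⟩ : ∃ km : Fin l.length, (km : ℕ) = (k : ℕ) - 1 := ⟨⟨_, hkm⟩, rfl⟩
        have hterm : ∀ j : Fin l.length, M k j * X j =
            (if j = km then X km else 0)
              + (if j = k then (-(l.get k : ℝ)) * X k else 0) := by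
          intro j
          have hjv := j.isLt
          rw [hM]
          by_cases h2 : j = k
          · subst h2
            rw [if_pos rfl, if_neg (by simp only [Fin.ext_iff, Fin.val_mk, hkmv]; omega),
              if_pos rfl]
            ring
          · rw [if_neg (fun h => h2 h.symm)]
            by_cases h1 : j = km
            · subst h1
              rw [if_pos (by simp only [Fin.ext_iff, Fin.val_mk, hkmv] at h2 ⊢; omega),
                if_pos rfl, if_neg h2]
              ring
            · rw [if_neg ?hc, if_neg h1, if_neg h2]
              · ring
              case hc =>
                simp only [Fin.ext_iff, Fin.val_mk, hkmv] at h1 h2 ⊢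
                omega
        rw [Finset.sum_congr rfl (fun j _ => hterm j), Finset.sum_add_distrib,
          Finset.sum_ite_eq', Finset.sum_ite_eq']
        simp only [Finset.mem_univ, if_true]
        have hrec := hzrecR (k : ℕ) hkv
        rw [if_neg hk1] at hrec
        have hkmX : X km = ((z (k : ℕ) : ℤ) : ℝ) := by
          show ((z ((km : ℕ) + 1) : ℤ) : ℝ) = _
          rw [hkmv]
          congr 2
          omega
        have hkX : X k = ((z ((k : ℕ) + 1) : ℤ) : ℝ) := rfl
        rw [hkmX, hkX, hgetk]
        linarith [hrec]
      · exfalso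
        omega
  -- symmetry
  have hsymm : ∀ i j : Fin l.length, M i j = M j i := by
    intro i j
    rw [hM, hM]
    by_cases h : i = j
    · subst h; rfl
    · rw [if_neg h, if_neg (Ne.symm h)]
      by_cases h2 : (i : ℕ) + 1 = (j : ℕ) ∨ (j : ℕ) + 1 = (i : ℕ)
      · rw [if_pos h2, if_pos (Or.symm h2)]
      · rw [if_neg h2, if_neg (fun hc => h2 (Or.symm hc))]
  have hoff : ∀ i j : Fin l.length, i ≠ j → (0 : ℝ) ≤ M i j := by
    intro i j hij
    rw [hM, if_neg hij]
    split <;> norm_num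
  have hrowR : ∀ i : Fin l.length, ∑ j, M i j * X j = 0 := by
    intro i
    have h := congrFun hMX i
    simpa [Matrix.mulVec, dotProduct] using h
  -- positive semidefiniteness of -M
  constructor
  · refine Matrix.PosSemidef.of_dotProduct_mulVec_nonneg ?_ ?_
    · show Matrix.conjTranspose (-M) = -M
      ext i j
      simp only [Matrix.conjTranspose_apply, Matrix.neg_apply, star_trivial]
      rw [hsymm j i]
    · intro v
      set w : Fin l.length → ℝ := fun i => v i / X i with hw_def
      have hv : ∀ i, w i * X i = v i := fun i => div_mul_cancel₀ (v i) (hXpos i).ne'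
      have hS : ∑ i, ∑ j, M i j * X i * X j * (w i - w j) ^ 2 =
          -2 * ∑ i, v i * ∑ j, M i j * v j := by
        have e1 : ∀ i : Fin l.length, ∑ j, (M i j * X i * X j * (w i - w j) ^ 2) =
            (X i * w i ^ 2) * (∑ j, M i j * X j)
              + (∑ j, (X j * w j ^ 2) * (M j i * X i))
              - 2 * (v i * ∑ j, M i j * v j) := by
          intro i
          rw [Finset.mul_sum, Finset.mul_sum, Finset.mul_sum, ← Finset.sum_add_distrib,
            ← Finset.sum_sub_distrib]
          refine Finset.sum_congr rfl fun j _ => ?_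
          rw [← hv i, ← hv j, hsymm j i]
          ring
        rw [Finset.sum_congr rfl (fun i _ => e1 i)]
        rw [Finset.sum_sub_distrib, Finset.sum_add_distrib]
        have e2 : ∑ i : Fin l.length, (X i * w i ^ 2) * (∑ j, M i j * X j) = 0 := by
          refine Finset.sum_eq_zero fun i _ => ?_
          rw [hrowR i, mul_zero]
        have e3 : ∑ i : Fin l.length, ∑ j, (X j * w j ^ 2) * (M j i * X i) = 0 := by
          rw [Finset.sum_comm]
          refine Finset.sum_eq_zero fun j _ => ?_
          rw [← Finset.mul_sum, hrowR j, mul_zero]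
        rw [e2, e3]
        rw [← Finset.mul_sum]
        ring
      have hSnn : 0 ≤ ∑ i, ∑ j, M i j * X i * X j * (w i - w j) ^ 2 := by
        refine Finset.sum_nonneg fun i _ => Finset.sum_nonneg fun j _ => ?_
        by_cases h : i = j
        · subst h; simp
        · have hMij := hoff i j h
          have hXi := (hXpos i).le
          have hXj := (hXpos j).le
          positivity
      have hQ : ∑ i, v i * ∑ j, M i j * v j ≤ 0 := by
        nlinarith [hS, hSnn]
      have hgoal : dotProduct (star v) ((-M).mulVec v)
          = -(∑ i, v i * ∑ j, M i j * v j) := by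
        simp [Matrix.mulVec, dotProduct, Matrix.neg_apply, mul_neg,
          Finset.mul_sum]
      show 0 ≤ dotProduct (star v) ((-M).mulVec v)
      rw [hgoal]
      linarith
  · refine ⟨X, ?_, hMX⟩
    intro h
    have h0 := congrFun h ⟨0, hnpos⟩
    have hp := hXpos ⟨0, hnpos⟩
    rw [h0] at hp
    exact lt_irrefl _ hp
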